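/- arXiv:2005.00875 — 2 statements merged into one kernel-verified Lean document; each statement's English description precedes it below -/
import Mathlib

section
/- For every integer i ≥ 3, every axis-aligned square S, and every triangle T of Slicing(i) of S, there exists at least one tile t of Tiling(4φ(i) − 2) of S such that t ⊆ T and one side of t is contained in a side of S. -/
open Real

noncomputable section

/-- Points of the Euclidean plane. -/
abbrev Pt := EuclideanSpace ℝ (Fin 2)

/-- The unit vector in direction angle `a`. -/
def unitDir (a : ℝ) : Pt := WithLp.toLp 2 ![Real.cos a, Real.sin a]

/-- The closed angular sector with apex `p`, swept clockwise from the half-line in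
direction angle `a` through angle `θ` (it consists of the points lying on the half-lines
from `p` in the direction angles `a - t` for `0 ≤ t ≤ θ`, including both bounding
half-lines). -/
def sector (p : Pt) (a θ : ℝ) : Set Pt :=
  {q | ∃ r : ℝ, 0 ≤ r ∧ ∃ t : ℝ, 0 ≤ t ∧ t ≤ θ ∧ q = p + r • unitDir (a - t)}

/-- The axis-aligned square with center `q` and side length `x`. -/
def square (q : Pt) (x : ℝ) : Set Pt :=
  {y | y 0 ∈ Set.Icc (q 0 - x / 2) (q 0 + x / 2) ∧ y 1 ∈ Set.Icc (q 1 - x / 2) (q 1 + x / 2)}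

/-- The tile in position `(a, b)` of `Tiling(m)` of the square with center `q` and side
length `x`: the `(a, b)`-th of the `4^m` closed congruent subsquares of side `x / 2^m`
arranged in a `2^m × 2^m` grid. -/
def tile (q : Pt) (x : ℝ) (m : ℕ) (a b : ℕ) : Set Pt :=
  {y | y 0 ∈ Set.Icc (q 0 - x / 2 + a * (x / 2 ^ m)) (q 0 - x / 2 + (a + 1) * (x / 2 ^ m)) ∧
       y 1 ∈ Set.Icc (q 1 - x / 2 + b * (x / 2 ^ m)) (q 1 - x / 2 + (b + 1) * (x / 2 ^ m))}

/-- `t` is a tile of `Tiling(m)` of the square with center `q` and side length `x`. -/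
def IsTile (q : Pt) (x : ℝ) (m : ℕ) (t : Set Pt) : Prop :=
  ∃ a b : ℕ, a < 2 ^ m ∧ b < 2 ^ m ∧ t = tile q x m a b

/-- The `k`-th piece of `Slicing(i)` of the square with center `q` and side length `x`:
the part of the square lying in the angular sector bounded by the half-lines from `q` at
direction angles `2πk/2^i` and `2π(k+1)/2^i` (for `i ≥ 3` this piece is a triangle). -/
def slicePiece (q : Pt) (x : ℝ) (i k : ℕ) : Set Pt :=
  {y | ∃ r : ℝ, 0 ≤ r ∧ ∃ θ : ℝ, 2 * π * k / 2 ^ i ≤ θ ∧ θ ≤ 2 * π * (k + 1) / 2 ^ i ∧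
    y = q + r • unitDir θ} ∩ square q x

/-- `T` is a triangle of `Slicing(i)` of the square with center `q` and side length `x`. -/
def IsSliceTriangle (q : Pt) (x : ℝ) (i : ℕ) (T : Set Pt) : Prop :=
  ∃ k : ℕ, k < 2 ^ i ∧ T = slicePiece q x i k

/-- The vertex of `Slicing(i)` on the boundary of the square of side 2 centered at the
origin: the intersection of the `k`-th slicing half-line with the boundary of the square. -/
def sliceVertex (i k : ℕ) : Pt :=
  (max |Real.cos (2 * π * k / 2 ^ i)| |Real.sin (2 * π * k / 2 ^ i)|)⁻¹ •
    unitDir (2 * π * k / 2 ^ i)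

/-- The set of side lengths of the triangles of `Slicing(i)` of the square of side 2
centered at the origin (the triangle `k` has vertices `0`, `sliceVertex i k` and
`sliceVertex i (k+1)`); the ratios of side lengths are independent of the size of the
square. -/
def sideLengths (i : ℕ) : Set ℝ :=
  ⋃ k ∈ Set.Iio (2 ^ i), {‖sliceVertex i k‖, dist (sliceVertex i k) (sliceVertex i (k + 1))}

/-- `ρ i`: the maximum of `⌈a/b⌉` over all side lengths `a`, `b` of triangles of
`Slicing(i)` of a square. -/
def rho (i : ℕ) : ℕ :=
  sSup {n : ℕ | ∃ a ∈ sideLengths i, ∃ b ∈ sideLengths i, n = ⌈a / b⌉₊}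

/-- `φ(i) = i · ρ i`. -/
def phi (i : ℕ) : ℕ := i * rho i

/-- `index(α) = 4 · φ(max(3, ⌈log₂(2π/α)⌉ + 1))`. -/
def index (α : ℝ) : ℕ := 4 * phi (max 3 (⌈Real.logb 2 (2 * π / α)⌉ + 1)).toNat

lemma unitDir_zero (a : ℝ) : unitDir a 0 = Real.cos a := rfl
lemma unitDir_one (a : ℝ) : unitDir a 1 = Real.sin a := rfl

lemma tile_subset_square (q : Pt) (x : ℝ) (hx : 0 ≤ x) (m : ℕ) {a b : ℕ}
    (ha : a < 2 ^ m) (hb : b < 2 ^ m) : tile q x m a b ⊆ square q x := by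
  intro y hy
  obtain ⟨⟨h1, h2⟩, ⟨h3, h4⟩⟩ := hy
  have hs : 0 ≤ x / 2 ^ m := by positivity
  have ha' : ((a : ℝ) + 1) ≤ 2 ^ m := by exact_mod_cast Nat.succ_le_of_lt ha
  have hb' : ((b : ℝ) + 1) ≤ 2 ^ m := by exact_mod_cast Nat.succ_le_of_lt hb
  have hpm : (0:ℝ) < 2 ^ m := by positivity
  have key : ((2:ℝ) ^ m) * (x / 2 ^ m) = x := by field_simp
  constructor
  · constructor
    · have : (0:ℝ) ≤ (a : ℝ) * (x / 2 ^ m) := by positivity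
      linarith
    · have : ((a : ℝ) + 1) * (x / 2 ^ m) ≤ ((2:ℝ) ^ m) * (x / 2 ^ m) :=
        mul_le_mul_of_nonneg_right ha' hs
      linarith
  · constructor
    · have : (0:ℝ) ≤ (b : ℝ) * (x / 2 ^ m) := by positivity
      linarith
    · have : ((b : ℝ) + 1) * (x / 2 ^ m) ≤ ((2:ℝ) ^ m) * (x / 2 ^ m) :=
        mul_le_mul_of_nonneg_right hb' hs
      linarith


set_option maxHeartbeats 1600000 in
lemma base (i m : ℕ) (hi : 3 ≤ i) (hm : i + 5 ≤ m) (q : Pt) (x : ℝ) (hx : 0 < x)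
    (k : ℕ) (hk : k + 1 ≤ 2 ^ (i - 3)) :
    ∃ b : ℕ, b < 2 ^ m ∧ tile q x m (2 ^ m - 1) b ⊆ slicePiece q x i k := by
  have hπ := Real.pi_gt_three
  set α : ℝ := 2 * π * k / 2 ^ i with hα
  set β : ℝ := 2 * π * (k + 1) / 2 ^ i with hβdef
  clear_value α β
  have hP8 : (8:ℝ) ≤ 2 ^ i := by
    calc (8:ℝ) = 2 ^ 3 := by norm_num
    _ ≤ 2 ^ i := by exact pow_le_pow_right₀ one_le_two hi
  have hPpos : (0:ℝ) < 2 ^ i := by positivity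
  have hpow : ((2:ℝ) ^ (i - 3)) * 8 = 2 ^ i := by
    rw [show (8:ℝ) = 2 ^ 3 by norm_num, ← pow_add]
    congr 1; omega
  have hk' : ((k:ℝ) + 1) ≤ 2 ^ (i - 3) := by exact_mod_cast hk
  have hβ4 : β ≤ π / 4 := by
    rw [hβdef, div_le_iff₀ hPpos, ← hpow]
    have h1 : 2 * π * ((k:ℝ) + 1) ≤ 2 * π * (2 ^ (i-3)) :=
      mul_le_mul_of_nonneg_left hk' (by positivity)
    linarith
  have hα0 : 0 ≤ α := by rw [hα]; positivity
  have hαβ : α < β := by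
    rw [hα, hβdef, div_lt_div_iff₀ hPpos hPpos]
    have := mul_pos Real.pi_pos hPpos
    linarith
  have hβπ2 : β < π / 2 := lt_of_le_of_lt hβ4 (by linarith)
  have hδ : β - α = 2 * π / 2 ^ i := by rw [hα, hβdef]; ring
  have hδpos : 0 < β - α := by linarith
  have hδ1 : β - α ≤ 1 := by
    rw [hδ, div_le_one hPpos]; nlinarith [Real.pi_lt_d2]
  have hcosα : 0 < Real.cos α := Real.cos_pos_of_mem_Ioo ⟨by linarith, by linarith⟩
  have hcosβ : 0 < Real.cos β := Real.cos_pos_of_mem_Ioo ⟨by linarith, by linarith⟩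
  have htanα0 : 0 ≤ Real.tan α := by
    rw [Real.tan_eq_sin_div_cos]
    exact div_nonneg (Real.sin_nonneg_of_nonneg_of_le_pi hα0 (by linarith)) hcosα.le
  have hmono := Real.strictMonoOn_tan.monotoneOn
  have hmemα : α ∈ Set.Ioo (-(π/2)) (π/2) := ⟨by linarith, by linarith⟩
  have hmemβ : β ∈ Set.Ioo (-(π/2)) (π/2) := ⟨by linarith, by linarith⟩
  have hmem4 : (π/4 : ℝ) ∈ Set.Ioo (-(π/2)) (π/2) := ⟨by linarith, by linarith⟩
  have htanβ1 : Real.tan β ≤ 1 := by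
    have := hmono hmemβ hmem4 hβ4
    rwa [Real.tan_pi_div_four] at this
  have htanαβ : Real.tan α ≤ Real.tan β := hmono hmemα hmemβ hαβ.le
  have hgap : Real.sin (β - α) ≤ Real.tan β - Real.tan α := by
    have hsub : Real.sin (β - α) = Real.sin β * Real.cos α - Real.cos β * Real.sin α :=
      Real.sin_sub β α
    rw [Real.tan_eq_sin_div_cos, Real.tan_eq_sin_div_cos, div_sub_div _ _ hcosβ.ne' hcosα.ne']
    rw [show Real.sin β * Real.cos α - Real.cos β * Real.sin α = Real.sin (β - α) from hsub.symm]
    have hc1 : Real.cos β * Real.cos α ≤ 1 :=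
      mul_le_one₀ (Real.cos_le_one β) hcosα.le (Real.cos_le_one α)
    have hcc : 0 < Real.cos β * Real.cos α := mul_pos hcosβ hcosα
    have hsnn : 0 ≤ Real.sin (β - α) :=
      Real.sin_nonneg_of_nonneg_of_le_pi hδpos.le (by linarith)
    rw [le_div_iff₀ hcc]
    nlinarith
  have hsinδ : (β - α) / 2 ≤ Real.sin (β - α) := by
    have h := Real.sin_gt_sub_cube hδpos
    nlinarith [sq_nonneg (β - α), mul_nonneg hδpos.le hδpos.le]
  have hmpos : (0:ℝ) < 2 ^ m := by positivity
  have hspos : (0:ℝ) < x / 2 ^ m := by positivity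
  have hE : (2:ℝ) ^ m * (x / 2 ^ m) = x := by field_simp
  have hm32 : (32:ℝ) * 2 ^ i ≤ 2 ^ m := by
    calc (32:ℝ) * 2 ^ i = 2 ^ (i + 5) := by rw [pow_add]; ring
    _ ≤ 2 ^ m := pow_le_pow_right₀ one_le_two hm
  have hgap2 : (2 * π / 2 ^ i) / 2 ≤ Real.tan β - Real.tan α := by rw [← hδ]; linarith
  have hXpos : (0:ℝ) < x / 2 := by positivity
  have e4 : (x / 2 ^ m) * 2 ^ i * 32 ≤ x := by
    rw [div_mul_eq_mul_div, div_mul_eq_mul_div, div_le_iff₀ hmpos]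
    have := mul_le_mul_of_nonneg_left hm32 hx.le
    linarith
  have e6 : (x / 2 ^ m) * 3 * 2 ^ i ≤ (x / 2) * π := by
    have hxp := mul_nonneg hx.le (by linarith : (0:ℝ) ≤ π - 3)
    linarith [e4]
  have hslack : (x / 2 ^ m) * 3 ≤ (x / 2) * (Real.tan β - Real.tan α) := by
    have e7 : (x/2) * ((2 * π / 2 ^ i) / 2) ≤ (x/2) * (Real.tan β - Real.tan α) :=
      mul_le_mul_of_nonneg_left hgap2 hXpos.le
    have e8 : (x / 2 ^ m) * 3 ≤ (x/2) * ((2 * π / 2 ^ i) / 2) := by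
      rw [show (x/2) * ((2 * π / 2 ^ i) / 2) = (x/2) * π / 2 ^ i by ring, le_div_iff₀ hPpos]
      linarith
    linarith
  obtain ⟨b, hbdef⟩ : ∃ n : ℕ, n = ⌈(x/2) * (1 + Real.tan α) / (x / 2 ^ m)⌉₊ := ⟨_, rfl⟩
  have harg0 : 0 ≤ (x/2) * (1 + Real.tan α) / (x / 2 ^ m) := by positivity
  have hb1 : (x/2) * (1 + Real.tan α) ≤ b * (x / 2 ^ m) := by
    rw [← div_le_iff₀ hspos, hbdef]; exact Nat.le_ceil _
  have hb2 : (b:ℝ) * (x / 2 ^ m) < (x/2) * (1 + Real.tan α) + (x / 2 ^ m) := by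
    rw [hbdef]
    have h := Nat.ceil_lt_add_one harg0
    have h2 := mul_lt_mul_of_pos_right h hspos
    rw [add_mul, div_mul_cancel₀ _ hspos.ne', one_mul] at h2
    exact h2
  have hkey2 : (b:ℝ) * (x / 2 ^ m) + (x / 2 ^ m) ≤
      Real.tan β * (x/2 - x / 2 ^ m) + x/2 := by
    linarith [mul_nonneg hspos.le (by linarith : (0:ℝ) ≤ 1 - Real.tan β), hb2, hslack]
  have hsX : 2 * (x / 2 ^ m) ≤ x / 2 := by
    linarith [mul_le_mul_of_nonneg_left hm32 hspos.le,
      mul_le_mul_of_nonneg_left hP8 hspos.le, hE, hx.le]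
  have h9 : (b:ℝ) * (x / 2 ^ m) ≤ 2 * (x/2) - 2 * (x / 2 ^ m) := by
    linarith [mul_nonneg (by linarith : (0:ℝ) ≤ 1 - Real.tan β)
      (by linarith : (0:ℝ) ≤ x/2 - x / 2 ^ m), hkey2]
  have hbN : b < 2 ^ m := by
    have hb3 : (b:ℝ) < 2 ^ m := by
      by_contra hcon
      push_neg at hcon
      have hcon2 := mul_le_mul_of_nonneg_right hcon hspos.le
      linarith [hE, hspos]
    exact_mod_cast hb3
  refine ⟨b, hbN, ?_⟩
  intro y hy
  have hcast : (((2:ℕ) ^ m - 1 : ℕ) : ℝ) = 2 ^ m - 1 := by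
    have h1 : (1:ℕ) ≤ 2 ^ m := Nat.one_le_two_pow
    push_cast [Nat.cast_sub h1]; ring
  obtain ⟨⟨h1, h2⟩, h3, h4⟩ := hy
  rw [hcast] at h1 h2
  have hE1 : ((2:ℝ) ^ m - 1) * (x / 2 ^ m) = x - x / 2 ^ m := by field_simp
  have hE2 : ((2:ℝ) ^ m - 1 + 1) * (x / 2 ^ m) = x := by field_simp; ring
  rw [hE1] at h1
  rw [hE2] at h2
  have hpx1 : x/2 - x / 2 ^ m ≤ y 0 - q 0 := by linarith
  have hpx2 : y 0 - q 0 ≤ x/2 := by linarith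
  have hpy1 : -(x/2) + b * (x / 2 ^ m) ≤ y 1 - q 1 := by linarith
  have hpy2 : y 1 - q 1 ≤ -(x/2) + ((b:ℝ) + 1) * (x / 2 ^ m) := by
    have := h4; push_cast at this ⊢; linarith
  have hpx0 : 0 < y 0 - q 0 := by linarith
  have hlow : Real.tan α * (y 0 - q 0) ≤ y 1 - q 1 := by
    linarith [mul_nonneg htanα0 (by linarith : (0:ℝ) ≤ x/2 - (y 0 - q 0)), hb1, hpy1]
  have hhigh : y 1 - q 1 ≤ Real.tan β * (y 0 - q 0) := by
    linarith [mul_nonneg (by linarith : (0:ℝ) ≤ Real.tan β)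
      (by linarith : (0:ℝ) ≤ (y 0 - q 0) - (x/2 - x / 2 ^ m)), hkey2, hpy2]
  set θ : ℝ := Real.arctan ((y 1 - q 1) / (y 0 - q 0)) with hθ
  clear_value θ
  have hcosθ : 0 < Real.cos θ := by rw [hθ]; exact Real.cos_arctan_pos _
  constructor
  · refine ⟨(y 0 - q 0) / Real.cos θ, div_nonneg hpx0.le hcosθ.le, θ, ?_, ?_, ?_⟩
    · rw [← hα, show α = Real.arctan (Real.tan α) from
        (Real.arctan_tan (by linarith) (by linarith)).symm]
      rw [hθ]
      exact Real.arctan_strictMono.monotone ((le_div_iff₀ hpx0).mpr (by linarith))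
    · rw [← hβdef, show β = Real.arctan (Real.tan β) from
        (Real.arctan_tan (by linarith) (by linarith)).symm]
      rw [hθ]
      exact Real.arctan_strictMono.monotone ((div_le_iff₀ hpx0).mpr (by linarith))
    · ext j
      fin_cases j
      · show y 0 = (q + ((y 0 - q 0) / Real.cos θ) • unitDir θ) 0
        rw [PiLp.add_apply, PiLp.smul_apply, unitDir_zero, smul_eq_mul,
          div_mul_cancel₀ _ hcosθ.ne']
        ring
      · show y 1 = (q + ((y 0 - q 0) / Real.cos θ) • unitDir θ) 1
        rw [PiLp.add_apply, PiLp.smul_apply, unitDir_one, smul_eq_mul]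
        have htθ : Real.tan θ = (y 1 - q 1) / (y 0 - q 0) := by
          rw [hθ]; exact Real.tan_arctan _
        have hst : (y 0 - q 0) / Real.cos θ * Real.sin θ = (y 0 - q 0) * Real.tan θ := by
          rw [Real.tan_eq_sin_div_cos]; field_simp
        rw [hst, htθ, mul_div_cancel₀ _ hpx0.ne']
        ring
  · refine tile_subset_square q x hx.le m (a := 2 ^ m - 1) (b := b) ?_ hbN ⟨⟨?_, ?_⟩, h3, h4⟩
    · have h1' : (1:ℕ) ≤ 2 ^ m := Nat.one_le_two_pow
      omega
    · rw [hcast, hE1]; linarith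
    · rw [hcast, hE2]; linarith

set_option maxHeartbeats 1600000 in
lemma rot_step (i m : ℕ) (hi : 2 ≤ i) (q : Pt) (x : ℝ) (hx : 0 < x) (k : ℕ)
    {a b : ℕ} (ha : a < 2 ^ m) (hb : b < 2 ^ m)
    (h : tile q x m a b ⊆ slicePiece q x i k) :
    tile q x m (2 ^ m - 1 - b) a ⊆ slicePiece q x i (k + 2 ^ (i - 2)) := by
  have hPpos : (0:ℝ) < 2 ^ i := by positivity
  have hmpos : (0:ℝ) < 2 ^ m := by positivity
  have hE : (2:ℝ) ^ m * (x / 2 ^ m) = x := by field_simp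
  have hpow2 : ((2:ℝ) ^ (i - 2)) * 4 = 2 ^ i := by
    rw [show (4:ℝ) = 2 ^ 2 by norm_num, ← pow_add]
    congr 1; omega
  have hpow2π : π * ((2:ℝ) ^ (i - 2)) * 4 = π * 2 ^ i := by rw [← hpow2]; ring
  have hm1 : (1:ℕ) ≤ 2 ^ m := Nat.one_le_two_pow
  have hcast : (((2:ℕ) ^ m - 1 - b : ℕ) : ℝ) = 2 ^ m - 1 - b := by
    have he : (2 ^ m - 1 - b : ℕ) = 2 ^ m - (1 + b) := by omega
    rw [he, Nat.cast_sub (by omega)]; push_cast; ring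
  intro y hy
  obtain ⟨⟨h1, h2⟩, h3, h4⟩ := hy
  rw [hcast] at h1 h2
  have hy' : (WithLp.toLp 2 ![q 0 + (y 1 - q 1), q 1 - (y 0 - q 0)] : Pt) ∈ tile q x m a b := by
    refine ⟨⟨?_, ?_⟩, ?_, ?_⟩ <;>
      simp only [PiLp.toLp_apply, Matrix.cons_val_zero, Matrix.cons_val_one, Matrix.head_cons] <;>
      nlinarith [h1, h2, h3, h4, hE]
  obtain ⟨⟨r, hr, θ, hθ1, hθ2, hyeq⟩, -⟩ := h hy'
  have e0 := congrFun (congrArg WithLp.ofLp hyeq) 0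
  have e1 := congrFun (congrArg WithLp.ofLp hyeq) 1
  simp only [PiLp.toLp_apply, Matrix.cons_val_zero, Matrix.cons_val_one, Matrix.head_cons, PiLp.add_apply,
    PiLp.smul_apply, smul_eq_mul, unitDir_zero, unitDir_one] at e0 e1
  have hθ1' := (div_le_iff₀ hPpos).mp hθ1
  have hθ2' := (le_div_iff₀ hPpos).mp hθ2
  constructor
  · refine ⟨r, hr, θ + π / 2, ?_, ?_, ?_⟩
    · push_cast
      rw [div_le_iff₀ hPpos]
      nlinarith [hθ1', hpow2π]
    · push_cast
      rw [le_div_iff₀ hPpos]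
      nlinarith [hθ2', hpow2π]
    · ext j
      fin_cases j
      · show y 0 = (q + r • unitDir (θ + π/2)) 0
        rw [PiLp.add_apply, PiLp.smul_apply, smul_eq_mul, unitDir_zero, Real.cos_add,
          Real.cos_pi_div_two, Real.sin_pi_div_two]
        nlinarith [e1]
      · show y 1 = (q + r • unitDir (θ + π/2)) 1
        rw [PiLp.add_apply, PiLp.smul_apply, smul_eq_mul, unitDir_one, Real.sin_add,
          Real.cos_pi_div_two, Real.sin_pi_div_two]
        nlinarith [e0]
  · exact tile_subset_square q x hx.le m (a := 2 ^ m - 1 - b) (b := a) (by omega) ha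
      ⟨⟨by rw [hcast]; linarith, by rw [hcast]; linarith⟩, h3, h4⟩

set_option maxHeartbeats 1600000 in
lemma refl_step (i m : ℕ) (hi : 2 ≤ i) (q : Pt) (x : ℝ) (hx : 0 < x) (k : ℕ)
    (hk : k + 1 ≤ 2 ^ (i - 2)) {a b : ℕ} (ha : a < 2 ^ m) (hb : b < 2 ^ m)
    (h : tile q x m a b ⊆ slicePiece q x i k) :
    tile q x m b a ⊆ slicePiece q x i (2 ^ (i - 2) - 1 - k) := by
  have hPpos : (0:ℝ) < 2 ^ i := by positivity
  have hpow2 : ((2:ℝ) ^ (i - 2)) * 4 = 2 ^ i := by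
    rw [show (4:ℝ) = 2 ^ 2 by norm_num, ← pow_add]
    congr 1; omega
  have hpow2π : π * ((2:ℝ) ^ (i - 2)) * 4 = π * 2 ^ i := by rw [← hpow2]; ring
  have hcast : (((2:ℕ) ^ (i - 2) - 1 - k : ℕ) : ℝ) = 2 ^ (i - 2) - 1 - k := by
    have he : (2 ^ (i - 2) - 1 - k : ℕ) = 2 ^ (i - 2) - (1 + k) := by omega
    rw [he, Nat.cast_sub (by omega)]; push_cast; ring
  intro y hy
  obtain ⟨⟨h1, h2⟩, h3, h4⟩ := hy
  have hy' : (WithLp.toLp 2 ![q 0 + (y 1 - q 1), q 1 + (y 0 - q 0)] : Pt) ∈ tile q x m a b := by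
    refine ⟨⟨?_, ?_⟩, ?_, ?_⟩ <;>
      simp only [PiLp.toLp_apply, Matrix.cons_val_zero, Matrix.cons_val_one, Matrix.head_cons] <;>
      linarith [h1, h2, h3, h4]
  obtain ⟨⟨r, hr, θ, hθ1, hθ2, hyeq⟩, -⟩ := h hy'
  have e0 := congrFun (congrArg WithLp.ofLp hyeq) 0
  have e1 := congrFun (congrArg WithLp.ofLp hyeq) 1
  simp only [PiLp.toLp_apply, Matrix.cons_val_zero, Matrix.cons_val_one, Matrix.head_cons, PiLp.add_apply,
    PiLp.smul_apply, smul_eq_mul, unitDir_zero, unitDir_one] at e0 e1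
  have hθ1' := (div_le_iff₀ hPpos).mp hθ1
  have hθ2' := (le_div_iff₀ hPpos).mp hθ2
  constructor
  · refine ⟨r, hr, π / 2 - θ, ?_, ?_, ?_⟩
    · rw [hcast, div_le_iff₀ hPpos]
      nlinarith [hθ2', hpow2π]
    · rw [hcast, le_div_iff₀ hPpos]
      nlinarith [hθ1', hpow2π]
    · ext j
      fin_cases j
      · show y 0 = (q + r • unitDir (π/2 - θ)) 0
        rw [PiLp.add_apply, PiLp.smul_apply, smul_eq_mul, unitDir_zero,
          Real.cos_pi_div_two_sub]
        nlinarith [e1]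
      · show y 1 = (q + r • unitDir (π/2 - θ)) 1
        rw [PiLp.add_apply, PiLp.smul_apply, smul_eq_mul, unitDir_one,
          Real.sin_pi_div_two_sub]
        nlinarith [e0]
  · exact tile_subset_square q x hx.le m hb ha ⟨⟨h1, h2⟩, h3, h4⟩

lemma norm_unitDir (a : ℝ) : ‖unitDir a‖ = 1 := by
  rw [EuclideanSpace.norm_eq]
  simp only [Fin.sum_univ_two, unitDir_zero, unitDir_one, Real.norm_eq_abs, sq_abs]
  rw [Real.cos_sq_add_sin_sq, Real.sqrt_one]

lemma vertex_c_pos (i k : ℕ) :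
    0 < max |Real.cos (2 * π * k / 2 ^ i)| |Real.sin (2 * π * k / 2 ^ i)| := by
  set θ : ℝ := 2 * π * k / 2 ^ i with hθ
  have hpyth := Real.sin_sq_add_cos_sq θ
  have h1 : |Real.cos θ| ≤ max |Real.cos θ| |Real.sin θ| := le_max_left _ _
  have h2 : |Real.sin θ| ≤ max |Real.cos θ| |Real.sin θ| := le_max_right _ _
  nlinarith [abs_nonneg (Real.cos θ), abs_nonneg (Real.sin θ), sq_abs (Real.cos θ),
    sq_abs (Real.sin θ)]

lemma vertex_norm_eq (i k : ℕ) :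
    ‖sliceVertex i k‖ = (max |Real.cos (2 * π * k / 2 ^ i)| |Real.sin (2 * π * k / 2 ^ i)|)⁻¹ := by
  rw [sliceVertex, norm_smul, norm_unitDir, mul_one, Real.norm_eq_abs,
    abs_of_pos (inv_pos.mpr (vertex_c_pos i k))]

lemma vertex_norm_bounds (i k : ℕ) : 1 ≤ ‖sliceVertex i k‖ ∧ ‖sliceVertex i k‖ ≤ 2 := by
  set θ : ℝ := 2 * π * k / 2 ^ i with hθ
  set c : ℝ := max |Real.cos θ| |Real.sin θ| with hc
  have hcpos : 0 < c := vertex_c_pos i k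
  have hc1 : c ≤ 1 := max_le (Real.abs_cos_le_one θ) (Real.abs_sin_le_one θ)
  have hpyth := Real.sin_sq_add_cos_sq θ
  have h1 : |Real.cos θ| ≤ c := le_max_left _ _
  have h2 : |Real.sin θ| ≤ c := le_max_right _ _
  have hc2 : 1 ≤ 2 * (c * c) := by
    nlinarith [abs_nonneg (Real.cos θ), abs_nonneg (Real.sin θ), sq_abs (Real.cos θ),
      sq_abs (Real.sin θ)]
  have hci : c * c⁻¹ = 1 := mul_inv_cancel₀ hcpos.ne'
  have hinn : 0 < c⁻¹ := inv_pos.mpr hcpos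
  rw [vertex_norm_eq, ← hθ, ← hc]
  constructor
  · nlinarith
  · nlinarith

lemma dist_vertex_lb (i k : ℕ) :
    Real.sqrt (2 * (1 - Real.cos (2 * π / 2 ^ i))) ≤
      dist (sliceVertex i k) (sliceVertex i (k + 1)) := by
  set θ1 : ℝ := 2 * π * k / 2 ^ i with hθ1
  set θ2 : ℝ := 2 * π * ((k + 1 : ℕ) : ℝ) / 2 ^ i with hθ2
  set r1 : ℝ := (max |Real.cos θ1| |Real.sin θ1|)⁻¹ with hr1
  set r2 : ℝ := (max |Real.cos θ2| |Real.sin θ2|)⁻¹ with hr2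
  have hδ : θ2 - θ1 = 2 * π / 2 ^ i := by
    rw [hθ1, hθ2]; push_cast; ring
  have hv1 : ∀ j, sliceVertex i k j = r1 * unitDir θ1 j := by
    intro j; rw [sliceVertex, ← hθ1, ← hr1, PiLp.smul_apply, smul_eq_mul]
  have hv2 : ∀ j, sliceVertex i (k+1) j = r2 * unitDir θ2 j := by
    intro j; rw [sliceVertex, ← hθ2, ← hr2, PiLp.smul_apply, smul_eq_mul]
  have hr1e : ‖sliceVertex i k‖ = r1 := by rw [vertex_norm_eq, ← hθ1, ← hr1]
  have hr2e : ‖sliceVertex i (k+1)‖ = r2 := by rw [vertex_norm_eq, ← hθ2, ← hr2]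
  have hb1 : 1 ≤ r1 := hr1e ▸ (vertex_norm_bounds i k).1
  have hb2 : 1 ≤ r2 := hr2e ▸ (vertex_norm_bounds i (k+1)).1
  have e : (r1 * Real.cos θ1 - r2 * Real.cos θ2)^2 + (r1 * Real.sin θ1 - r2 * Real.sin θ2)^2
      = r1^2 + r2^2 - 2*r1*r2*Real.cos (θ2 - θ1) := by
    rw [Real.cos_sub]
    have p1 := Real.sin_sq_add_cos_sq θ1
    have p2 := Real.sin_sq_add_cos_sq θ2
    linear_combination r1^2 * p1 + r2^2 * p2
  have hmain : 2 * (1 - Real.cos (2 * π / 2 ^ i)) ≤ r1^2 + r2^2 - 2*r1*r2*Real.cos (θ2 - θ1) := by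
    rw [hδ]
    have hr12 : 1 ≤ r1 * r2 := by nlinarith
    nlinarith [sq_nonneg (r1 - r2), mul_nonneg (sub_nonneg.mpr hr12)
      (sub_nonneg.mpr (Real.cos_le_one (2 * π / 2 ^ i)))]
  have hdcomp : dist (sliceVertex i k) (sliceVertex i (k+1)) =
      Real.sqrt ((r1 * Real.cos θ1 - r2 * Real.cos θ2)^2 +
        (r1 * Real.sin θ1 - r2 * Real.sin θ2)^2) := by
    rw [EuclideanSpace.dist_eq, Fin.sum_univ_two, Real.dist_eq, Real.dist_eq, sq_abs, sq_abs,
      hv1 0, hv1 1, hv2 0, hv2 1]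
    simp only [unitDir_zero, unitDir_one]
  rw [hdcomp, e]
  exact Real.sqrt_le_sqrt hmain

lemma dist_vertex_ub (i k : ℕ) : dist (sliceVertex i k) (sliceVertex i (k + 1)) ≤ 4 := by
  have h := dist_le_norm_add_norm (sliceVertex i k) (sliceVertex i (k+1))
  have h1 := (vertex_norm_bounds i k).2
  have h2 := (vertex_norm_bounds i (k+1)).2
  linarith

lemma sideLengths_bounds (i : ℕ) :
    ∀ L ∈ sideLengths i,
      min 1 (Real.sqrt (2 * (1 - Real.cos (2 * π / 2 ^ i)))) ≤ L ∧ L ≤ 4 := by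
  intro L hL
  rw [sideLengths] at hL
  simp only [Set.mem_iUnion, Set.mem_insert_iff, Set.mem_singleton_iff] at hL
  obtain ⟨k, -, hL⟩ := hL
  rcases hL with rfl | rfl
  · exact ⟨le_trans (min_le_left _ _) (vertex_norm_bounds i k).1,
      le_trans (vertex_norm_bounds i k).2 (by norm_num)⟩
  · exact ⟨le_trans (min_le_right _ _) (dist_vertex_lb i k), dist_vertex_ub i k⟩

lemma c0_pos (i : ℕ) (hi : 3 ≤ i) :
    0 < min 1 (Real.sqrt (2 * (1 - Real.cos (2 * π / 2 ^ i)))) := by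
  have hπ := Real.pi_gt_three
  have hP8 : (8:ℝ) ≤ 2 ^ i := by
    calc (8:ℝ) = 2 ^ 3 := by norm_num
    _ ≤ 2 ^ i := pow_le_pow_right₀ one_le_two hi
  have hPpos : (0:ℝ) < 2 ^ i := by positivity
  have hδpos : 0 < 2 * π / 2 ^ i := by positivity
  have hδle : 2 * π / 2 ^ i ≤ 1 := by
    rw [div_le_one hPpos]; nlinarith [Real.pi_lt_d2]
  have hcos : Real.cos (2 * π / 2 ^ i) < 1 := by
    have := Real.strictAntiOn_cos (Set.mem_Icc.mpr ⟨le_refl 0, Real.pi_pos.le⟩)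
      (Set.mem_Icc.mpr ⟨hδpos.le, by linarith⟩) hδpos
    rwa [Real.cos_zero] at this
  have : 0 < 2 * (1 - Real.cos (2 * π / 2 ^ i)) := by linarith
  exact lt_min one_pos (Real.sqrt_pos.mpr this)

lemma ratios_bddAbove (i : ℕ) (hi : 3 ≤ i) :
    BddAbove {n : ℕ | ∃ a ∈ sideLengths i, ∃ b ∈ sideLengths i, n = ⌈a / b⌉₊} := by
  set c0 := min 1 (Real.sqrt (2 * (1 - Real.cos (2 * π / 2 ^ i)))) with hc0
  have hc0pos := c0_pos i hi
  refine ⟨⌈(4:ℝ) / c0⌉₊, fun n hn => ?_⟩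
  obtain ⟨a, ha, b, hb, rfl⟩ := hn
  have hA := sideLengths_bounds i a ha
  have hB := sideLengths_bounds i b hb
  exact Nat.ceil_le_ceil (div_le_div₀ (by norm_num) hA.2 hc0pos hB.1)

lemma one_mem_ratios (i : ℕ) :
    1 ∈ {n : ℕ | ∃ a ∈ sideLengths i, ∃ b ∈ sideLengths i, n = ⌈a / b⌉₊} := by
  have hmem : ‖sliceVertex i 0‖ ∈ sideLengths i := by
    rw [sideLengths]
    simp only [Set.mem_iUnion, Set.mem_insert_iff, Set.mem_singleton_iff]
    exact ⟨0, Set.mem_Iio.mpr (pow_pos (by norm_num) i), Or.inl rfl⟩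
  have hpos : (0:ℝ) < ‖sliceVertex i 0‖ := lt_of_lt_of_le one_pos (vertex_norm_bounds i 0).1
  refine ⟨_, hmem, _, hmem, ?_⟩
  rw [div_self hpos.ne', Nat.ceil_one]

lemma rho_ge_one (i : ℕ) (hi : 3 ≤ i) : 1 ≤ rho i :=
  le_csSup (ratios_bddAbove i hi) (one_mem_ratios i)

lemma rot_iter (i m : ℕ) (hi : 2 ≤ i) (q : Pt) (x : ℝ) (hx : 0 < x) :
    ∀ (t k : ℕ) (a b : ℕ), a < 2 ^ m → b < 2 ^ m →
      tile q x m a b ⊆ slicePiece q x i k →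
      (a = 0 ∨ a = 2 ^ m - 1 ∨ b = 0 ∨ b = 2 ^ m - 1) →
      ∃ a' b' : ℕ, a' < 2 ^ m ∧ b' < 2 ^ m ∧
        tile q x m a' b' ⊆ slicePiece q x i (k + t * 2 ^ (i - 2)) ∧
        (a' = 0 ∨ a' = 2 ^ m - 1 ∨ b' = 0 ∨ b' = 2 ^ m - 1) := by
  intro t
  induction t with
  | zero => intro k a b ha hb hsub hbd; exact ⟨a, b, ha, hb, by simpa using hsub, hbd⟩
  | succ t ih =>
    intro k a b ha hb hsub hbd
    obtain ⟨a', b', ha', hb', hsub', hbd'⟩ := ih k a b ha hb hsub hbd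
    have hm1 : (1:ℕ) ≤ 2 ^ m := Nat.one_le_two_pow
    refine ⟨2 ^ m - 1 - b', a', by omega, ha', ?_, by omega⟩
    have h := rot_step i m hi q x hx _ ha' hb' hsub'
    have he : k + (t + 1) * 2 ^ (i - 2) = k + t * 2 ^ (i - 2) + 2 ^ (i - 2) := by ring
    rw [he]
    exact h

lemma main_gen (i m : ℕ) (hi : 3 ≤ i) (hm : i + 5 ≤ m) (q : Pt) (x : ℝ) (hx : 0 < x)
    (k : ℕ) (hk : k < 2 ^ i) :
    ∃ a b : ℕ, a < 2 ^ m ∧ b < 2 ^ m ∧ tile q x m a b ⊆ slicePiece q x i k ∧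
      (a = 0 ∨ a = 2 ^ m - 1 ∨ b = 0 ∨ b = 2 ^ m - 1) := by
  have hm1 : (1:ℕ) ≤ 2 ^ m := Nat.one_le_two_pow
  have h32 : 2 ^ (i - 3) * 2 = 2 ^ (i - 2) := by
    rw [← pow_succ]; congr 1; omega
  have h4d : 2 ^ i = 4 * 2 ^ (i - 2) := by
    rw [show (4:ℕ) = 2 ^ 2 by norm_num, ← pow_add]; congr 1; omega
  have hdpos : 0 < 2 ^ (i - 2) := pow_pos (by norm_num) _
  have hk0 : k % 2 ^ (i - 2) < 2 ^ (i - 2) := Nat.mod_lt _ hdpos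
  have step1 : ∃ a b : ℕ, a < 2 ^ m ∧ b < 2 ^ m ∧
      tile q x m a b ⊆ slicePiece q x i (k % 2 ^ (i - 2)) ∧
      (a = 0 ∨ a = 2 ^ m - 1 ∨ b = 0 ∨ b = 2 ^ m - 1) := by
    by_cases hcase : k % 2 ^ (i - 2) + 1 ≤ 2 ^ (i - 3)
    · obtain ⟨b, hb, hsub⟩ := base i m hi hm q x hx _ hcase
      exact ⟨2 ^ m - 1, b, by omega, hb, hsub, Or.inr (Or.inl rfl)⟩
    · have hk1 : (2 ^ (i - 2) - 1 - k % 2 ^ (i - 2)) + 1 ≤ 2 ^ (i - 3) := by omega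
      obtain ⟨b, hb, hsub⟩ := base i m hi hm q x hx _ hk1
      have hsub2 := refl_step i m (by omega) q x hx _ (by omega) (by omega : 2 ^ m - 1 < 2 ^ m)
        hb hsub
      have he : 2 ^ (i - 2) - 1 - (2 ^ (i - 2) - 1 - k % 2 ^ (i - 2)) = k % 2 ^ (i - 2) := by
        omega
      rw [he] at hsub2
      exact ⟨b, 2 ^ m - 1, hb, by omega, hsub2, Or.inr (Or.inr (Or.inr rfl))⟩
  obtain ⟨a, b, ha, hb, hsub, hbd⟩ := step1
  obtain ⟨a', b', ha', hb', hsub', hbd'⟩ :=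
    rot_iter i m (by omega) q x hx (k / 2 ^ (i - 2)) (k % 2 ^ (i - 2)) a b ha hb hsub hbd
  have hidx : k % 2 ^ (i - 2) + k / 2 ^ (i - 2) * 2 ^ (i - 2) = k := by
    rw [Nat.add_comm, Nat.mul_comm]
    exact Nat.div_add_mod k (2 ^ (i - 2))
  rw [hidx] at hsub'
  exact ⟨a', b', ha', hb', hsub', hbd'⟩


/-- For every integer `i ≥ 3`, every axis-aligned square `S` and every triangle `T` of
`Slicing(i)` of `S`, there is a tile of `Tiling(4φ(i) − 2)` of `S` contained in `T` and
having one of its sides contained in a side of `S` (i.e., lying in the boundary row or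
column of the grid of tiles). -/
theorem slice_triangle_contains_boundary_tile (i : ℕ) (hi : 3 ≤ i)
    (q : Pt) (x : ℝ) (hx : 0 < x)
    (T : Set Pt) (hT : IsSliceTriangle q x i T) :
    ∃ a b : ℕ, a < 2 ^ (4 * phi i - 2) ∧ b < 2 ^ (4 * phi i - 2) ∧
      tile q x (4 * phi i - 2) a b ⊆ T ∧
      (a = 0 ∨ a = 2 ^ (4 * phi i - 2) - 1 ∨ b = 0 ∨ b = 2 ^ (4 * phi i - 2) - 1) := by
  obtain ⟨k, hk, rfl⟩ := hT
  have hphi : i ≤ phi i := by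
    have := rho_ge_one i hi
    calc i = i * 1 := (Nat.mul_one i).symm
    _ ≤ i * rho i := Nat.mul_le_mul_left i this
  have hm : i + 5 ≤ 4 * phi i - 2 := by omega
  exact main_gen i (4 * phi i - 2) hi hm q x hx k hk
end
end

section
/- Let P be a polygonal path in ℝ² (a finite concatenation of straight segments traversed consecutively) of total length L. Then the Lebesgue measure of the set of points of ℝ² at distance at most 1 from some point of P is at most 2L + π. -/
open Real MeasureTheory

noncomputable section

/-- The length of the polygonal path with consecutive vertices `v 0, v 1, …, v N`:
the sum of the lengths of its segments. -/
def polyLength {N : ℕ} (v : Fin (N + 1) → Pt) : ℝ :=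
  ∑ i : Fin N, dist (v i.castSucc) (v i.succ)

/-- The set of points of the polygonal path with consecutive vertices `v 0, …, v N`. -/
def polySet {N : ℕ} (v : Fin (N + 1) → Pt) : Set Pt :=
  ⋃ i : Fin N, segment ℝ (v i.castSucc) (v i.succ)

section Aux

set_option maxHeartbeats 1000000

lemma polyLength_nonneg {N : ℕ} (v : Fin (N + 1) → Pt) : 0 ≤ polyLength v :=
  Finset.sum_nonneg fun _ _ => dist_nonneg

lemma volume_unit_closedBall (x : Pt) :
    volume (Metric.closedBall x 1) = ENNReal.ofReal π := by
  rw [EuclideanSpace.volume_closedBall]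
  norm_num [Fintype.card_fin, Real.sq_sqrt Real.pi_nonneg, Real.Gamma_two]

lemma volume_Y (d : ℝ) (hd : 0 ≤ d) :
    volume {p : Pt | p 1 ∈ Set.Icc (-1:ℝ) 1 ∧
      p 0 ∈ Set.Ioc (Real.sqrt (1 - (p 1)^2)) (d + Real.sqrt (1 - (p 1)^2))} =
      ENNReal.ofReal (2 * d) := by
  have hs : Continuous fun y : ℝ => Real.sqrt (1 - y ^ 2) :=
    (continuous_const.sub (continuous_pow 2)).sqrt
  set Z : Set (ℝ × ℝ) := {p : ℝ × ℝ | p.1 ∈ Set.Icc (-1:ℝ) 1 ∧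
      p.2 ∈ Set.Ioc (Real.sqrt (1 - p.1^2)) (d + Real.sqrt (1 - p.1^2))} with hZdef
  have hZ : MeasurableSet Z := by
    have h1 : MeasurableSet {p : ℝ × ℝ | p.1 ∈ Set.Icc (-1:ℝ) 1} :=
      measurable_fst measurableSet_Icc
    have h2 : MeasurableSet {p : ℝ × ℝ | Real.sqrt (1 - p.1^2) < p.2} :=
      measurableSet_lt (hs.comp continuous_fst).measurable measurable_snd
    have h3 : MeasurableSet {p : ℝ × ℝ | p.2 ≤ d + Real.sqrt (1 - p.1^2)} :=
      measurableSet_le measurable_snd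
        (measurable_const.add (hs.comp continuous_fst).measurable)
    exact h1.inter (h2.inter h3)
  have hGm : MeasurePreserving
      (fun q : Pt => ((q 1 : ℝ), (q 0 : ℝ))) (volume : Measure Pt) volume := by
    have e1 := EuclideanSpace.volume_preserving_symm_measurableEquiv_toLp (Fin 2)
    have e2 := volume_preserving_piFinTwo (fun _ : Fin 2 => ℝ)
    have e3 : MeasurePreserving (Prod.swap : ℝ × ℝ → ℝ × ℝ) volume volume := by
      rw [Measure.volume_eq_prod]
      exact Measure.measurePreserving_swap
    exact e3.comp (e2.comp e1)
  have hpre : {p : Pt | p 1 ∈ Set.Icc (-1:ℝ) 1 ∧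
      p 0 ∈ Set.Ioc (Real.sqrt (1 - (p 1)^2)) (d + Real.sqrt (1 - (p 1)^2))} =
      (fun q : Pt => ((q 1 : ℝ), (q 0 : ℝ))) ⁻¹' Z := rfl
  rw [hpre, hGm.measure_preimage hZ.nullMeasurableSet]
  rw [Measure.volume_eq_prod, Measure.prod_apply hZ]
  have hslice : ∀ y : ℝ, volume (Prod.mk y ⁻¹' Z) =
      Set.indicator (Set.Icc (-1:ℝ) 1) (fun _ => ENNReal.ofReal d) y := by
    intro y
    by_cases hy : y ∈ Set.Icc (-1:ℝ) 1
    · have : Prod.mk y ⁻¹' Z =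
          Set.Ioc (Real.sqrt (1 - y^2)) (d + Real.sqrt (1 - y^2)) := by
        ext x; simp [hZdef, hy.1, hy.2]
      rw [this, Set.indicator_of_mem hy, Real.volume_Ioc]
      congr 1; ring
    · have : Prod.mk y ⁻¹' Z = ∅ := by
        ext x
        simp only [hZdef, Set.mem_preimage, Set.mem_setOf_eq, Set.mem_empty_iff_false,
          iff_false, not_and]
        intro h; exact absurd h hy
      rw [this, Set.indicator_of_notMem hy, measure_empty]
  calc ∫⁻ y, volume (Prod.mk y ⁻¹' Z)
      = ∫⁻ y, Set.indicator (Set.Icc (-1:ℝ) 1) (fun _ => ENNReal.ofReal d) y := by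
        congr 1; ext y; exact hslice y
    _ = ENNReal.ofReal d * volume (Set.Icc (-1:ℝ) 1) := by
        rw [lintegral_indicator measurableSet_Icc, setLIntegral_const]
    _ = ENNReal.ofReal (2 * d) := by
        rw [Real.volume_Icc, ← ENNReal.ofReal_mul hd]
        norm_num [mul_comm]

lemma pt_dist (p q : Pt) :
    dist p q = Real.sqrt ((p 0 - q 0)^2 + (p 1 - q 1)^2) := by
  rw [EuclideanSpace.dist_eq]
  simp [Fin.sum_univ_two, Real.dist_eq, sq_abs]

lemma key_diff (a b : Pt) :
    volume ({q : Pt | ∃ y ∈ segment ℝ a b, dist q y ≤ 1} \ Metric.closedBall a 1) ≤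
      ENNReal.ofReal (2 * dist a b) := by
  rcases eq_or_ne a b with rfl | hab
  · have : {q : Pt | ∃ y ∈ segment ℝ a a, dist q y ≤ 1} \ Metric.closedBall a 1 = ∅ := by
      ext q
      simp [segment_same, Metric.mem_closedBall]
    rw [this, measure_empty]
    exact zero_le
  set d := dist a b with hddef
  have hd : 0 < d := dist_pos.mpr hab
  set E₁ : Pt := EuclideanSpace.single (0 : Fin 2) (1:ℝ) with hE₁def
  have hE₁ : ‖E₁‖ = 1 := by rw [hE₁def, EuclideanSpace.norm_single]; norm_num
  set u : Pt := d⁻¹ • (b - a) with hudef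
  have hu : ‖u‖ = 1 := by
    rw [hudef, norm_smul, norm_inv, Real.norm_eq_abs, abs_of_pos hd,
      ← dist_eq_norm, dist_comm b a]
    field_simp
    exact hddef.symm
  set R : Pt ≃ₗᵢ[ℝ] Pt := Submodule.reflection (ℝ ∙ (u - E₁))ᗮ with hRdef
  have hRu : R u = E₁ := Submodule.reflection_sub (by rw [hu, hE₁])
  set G : Pt → Pt := fun q => R (q - a) with hGdef
  have hGmp : MeasurePreserving G (volume : Measure Pt) volume :=
    R.measurePreserving.comp (measurePreserving_sub_right volume a)
  set Y : Set Pt := {p : Pt | p 1 ∈ Set.Icc (-1:ℝ) 1 ∧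
      p 0 ∈ Set.Ioc (Real.sqrt (1 - (p 1)^2)) (d + Real.sqrt (1 - (p 1)^2))} with hYdef
  have hY : MeasurableSet Y := by
    have hsc : Continuous fun y : ℝ => Real.sqrt (1 - y ^ 2) :=
      (continuous_const.sub (continuous_pow 2)).sqrt
    have c1 : Continuous fun p : Pt => p 1 :=
      (continuous_apply (1 : Fin 2)).comp (PiLp.continuous_ofLp 2 fun _ : Fin 2 => ℝ)
    have c0 : Continuous fun p : Pt => p 0 :=
      (continuous_apply (0 : Fin 2)).comp (PiLp.continuous_ofLp 2 fun _ : Fin 2 => ℝ)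
    have h1 : MeasurableSet {p : Pt | p 1 ∈ Set.Icc (-1:ℝ) 1} :=
      c1.measurable measurableSet_Icc
    have h2 : MeasurableSet {p : Pt | Real.sqrt (1 - (p 1)^2) < p 0} :=
      measurableSet_lt (hsc.comp c1).measurable c0.measurable
    have h3 : MeasurableSet {p : Pt | p 0 ≤ d + Real.sqrt (1 - (p 1)^2)} :=
      measurableSet_le c0.measurable (measurable_const.add (hsc.comp c1).measurable)
    exact h1.inter (h2.inter h3)
  have hsub : {q : Pt | ∃ y ∈ segment ℝ a b, dist q y ≤ 1} \ Metric.closedBall a 1 ⊆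
      G ⁻¹' Y := by
    rintro q ⟨⟨y, hy, hqy⟩, hq⟩
    rw [Metric.mem_closedBall, not_le] at hq
    rw [segment_eq_image'] at hy
    obtain ⟨t, ht, rfl⟩ := hy
    have hba : b - a = d • u := by
      rw [hudef, smul_smul, mul_inv_cancel₀ (ne_of_gt hd), one_smul]
    have hGy : G (a + t • (b - a)) = (t * d) • E₁ := by
      rw [hGdef]
      simp only [add_sub_cancel_left]
      rw [hba, smul_smul, R.map_smul, hRu]
    have hd1 : dist (G q) ((t * d) • E₁) ≤ 1 := by
      rw [← hGy, hGdef]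
      simpa only [LinearIsometryEquiv.dist_map, dist_sub_right] using hqy
    have hd2 : 1 < dist (G q) 0 := by
      have h0 : dist (G q) 0 = dist q a := by
        rw [hGdef]
        simp only [dist_zero_right, R.norm_map, ← dist_eq_norm]
      rw [h0]; exact hq
    have hc0 : ((t * d) • E₁) 0 = t * d := by
      rw [hE₁def]
      simp [EuclideanSpace.single_apply]
    have hc1 : ((t * d) • E₁) 1 = 0 := by
      rw [hE₁def]
      simp [EuclideanSpace.single_apply]
    rw [pt_dist, hc0, hc1] at hd1
    rw [pt_dist] at hd2
    have h00 : (0 : Pt) 0 = 0 := rfl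
    have h01 : (0 : Pt) 1 = 0 := rfl
    rw [h00, h01, sub_zero, sub_zero] at hd2
    rw [sub_zero] at hd1
    set x : ℝ := G q 0 with hxdef
    set z : ℝ := G q 1 with hzdef
    have hA : (x - t * d)^2 + z^2 ≤ 1 := by
      nlinarith [Real.sq_sqrt (show (0:ℝ) ≤ (x - t*d)^2 + z^2 by positivity),
        Real.sqrt_nonneg ((x - t*d)^2 + z^2)]
    have hB : 1 < x^2 + z^2 := by
      nlinarith [Real.sq_sqrt (show (0:ℝ) ≤ x^2 + z^2 by positivity),
        Real.sqrt_nonneg (x^2 + z^2)]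
    have hz2 : z^2 ≤ 1 := by nlinarith [sq_nonneg (x - t*d)]
    have hs2 : (Real.sqrt (1 - z^2))^2 = 1 - z^2 := Real.sq_sqrt (by nlinarith)
    have hsnn : (0:ℝ) ≤ Real.sqrt (1 - z^2) := Real.sqrt_nonneg _
    have htd : 0 ≤ t * d := mul_nonneg ht.1 hd.le
    have htd' : t * d ≤ d := by nlinarith [ht.2, hd.le]
    set s : ℝ := Real.sqrt (1 - z^2)
    refine ⟨⟨?_, ?_⟩, ?_, ?_⟩
    · nlinarith [sq_nonneg (z + 1), sq_nonneg (x - t*d)]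
    · nlinarith [sq_nonneg (z - 1), sq_nonneg (x - t*d)]
    · have hxl : t * d - s ≤ x := by nlinarith [sq_nonneg (x - t*d + s)]
      nlinarith [sq_nonneg (x - s), sq_nonneg (x + s)]
    · nlinarith [sq_nonneg (x - t*d - s)]
  calc volume ({q : Pt | ∃ y ∈ segment ℝ a b, dist q y ≤ 1} \ Metric.closedBall a 1)
      ≤ volume (G ⁻¹' Y) := measure_mono hsub
    _ = volume Y := hGmp.measure_preimage hY.nullMeasurableSet
    _ = ENNReal.ofReal (2 * d) := volume_Y d hd.le

lemma stadium (a b : Pt) :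
    volume {q : Pt | ∃ y ∈ segment ℝ a b, dist q y ≤ 1} ≤
      ENNReal.ofReal (2 * dist a b + π) := by
  calc volume {q : Pt | ∃ y ∈ segment ℝ a b, dist q y ≤ 1}
      ≤ volume (({q : Pt | ∃ y ∈ segment ℝ a b, dist q y ≤ 1} \ Metric.closedBall a 1)
          ∪ Metric.closedBall a 1) := by
        apply measure_mono
        intro q hq
        by_cases h : q ∈ Metric.closedBall a 1
        · exact Or.inr h
        · exact Or.inl ⟨hq, h⟩
    _ ≤ volume ({q : Pt | ∃ y ∈ segment ℝ a b, dist q y ≤ 1} \ Metric.closedBall a 1)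
          + volume (Metric.closedBall a 1) := measure_union_le _ _
    _ ≤ ENNReal.ofReal (2 * dist a b) + ENNReal.ofReal π := by
        exact add_le_add (key_diff a b) (le_of_eq (volume_unit_closedBall a))
    _ = ENNReal.ofReal (2 * dist a b + π) :=
        (ENNReal.ofReal_add (by positivity) Real.pi_nonneg).symm

end Aux

/-- The area of the set of points at distance at most 1 from a polygonal path of total
length `L` is at most `2L + π`. -/
theorem neighborhood_of_path_area (N : ℕ) (v : Fin (N + 1) → Pt) :
    volume {q : Pt | ∃ y ∈ polySet v, dist q y ≤ 1} ≤
      ENNReal.ofReal (2 * polyLength v + π) := by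
  induction N with
  | zero =>
    have : {q : Pt | ∃ y ∈ polySet v, dist q y ≤ 1} = ∅ := by
      ext q; simp [polySet]
    rw [this, measure_empty]
    exact zero_le
  | succ n ih =>
    rcases n with _ | m
    · -- single segment
      have hset : {q : Pt | ∃ y ∈ polySet v, dist q y ≤ 1} =
          {q : Pt | ∃ y ∈ segment ℝ (v (Fin.castSucc 0)) (v (Fin.succ 0)), dist q y ≤ 1} := by
        ext q
        simp only [polySet, Set.mem_iUnion, Set.mem_setOf_eq]
        constructor
        · rintro ⟨y, ⟨i, hi⟩, hqy⟩
          exact ⟨y, by rwa [Fin.fin_one_eq_zero i] at hi, hqy⟩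
        · rintro ⟨y, hy, hqy⟩
          exact ⟨y, ⟨0, hy⟩, hqy⟩
      have hlen : polyLength v = dist (v (Fin.castSucc 0)) (v (Fin.succ 0)) := by
        simp [polyLength]
      rw [hset, hlen]
      exact stadium _ _
    · -- at least two segments
      set L : Fin (m + 2) := Fin.last (m + 1) with hLdef
      set a := v L.castSucc with hadef
      set b := v L.succ with hbdef
      set v' : Fin (m + 2) → Pt := v ∘ Fin.castSucc with hv'def
      have hpoly : polySet v = polySet v' ∪ segment ℝ a b := by
        ext p
        simp only [polySet, Set.mem_iUnion, Set.mem_union, hv'def, Function.comp_apply]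
        constructor
        · rintro ⟨i, hi⟩
          rcases Fin.eq_castSucc_or_eq_last i with ⟨j, rfl⟩ | rfl
          · left; exact ⟨j, by rwa [Fin.succ_castSucc] at hi⟩
          · right; exact hi
        · rintro (⟨j, hj⟩ | hb)
          · exact ⟨j.castSucc, by rwa [Fin.succ_castSucc]⟩
          · exact ⟨L, hb⟩
      have hlen : polyLength v = polyLength v' + dist a b := by
        simp only [polyLength]
        rw [Fin.sum_univ_castSucc]
        congr 1
      have hamem : a ∈ polySet v' := by
        have : a = v' (Fin.last m).succ := by
          rw [hv'def, Function.comp_apply, hadef, hLdef, Fin.succ_last]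
        rw [this]
        exact Set.mem_iUnion.mpr ⟨Fin.last m, right_mem_segment ℝ _ _⟩
      have hball : Metric.closedBall a 1 ⊆ {q : Pt | ∃ y ∈ polySet v', dist q y ≤ 1} :=
        fun q hq => ⟨a, hamem, Metric.mem_closedBall.mp hq⟩
      have hTsub : {q : Pt | ∃ y ∈ polySet v, dist q y ≤ 1} ⊆
          {q : Pt | ∃ y ∈ polySet v', dist q y ≤ 1} ∪
          ({q : Pt | ∃ y ∈ segment ℝ a b, dist q y ≤ 1} \ Metric.closedBall a 1) := by
        rintro q ⟨y, hy, hqy⟩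
        rw [hpoly] at hy
        rcases hy with h | h
        · exact Or.inl ⟨y, h, hqy⟩
        · by_cases hcb : q ∈ Metric.closedBall a 1
          · exact Or.inl (hball hcb)
          · exact Or.inr ⟨⟨y, h, hqy⟩, hcb⟩
      calc volume {q : Pt | ∃ y ∈ polySet v, dist q y ≤ 1}
          ≤ volume ({q : Pt | ∃ y ∈ polySet v', dist q y ≤ 1} ∪
              ({q : Pt | ∃ y ∈ segment ℝ a b, dist q y ≤ 1} \ Metric.closedBall a 1)) :=
            measure_mono hTsub
        _ ≤ volume {q : Pt | ∃ y ∈ polySet v', dist q y ≤ 1} +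
              volume ({q : Pt | ∃ y ∈ segment ℝ a b, dist q y ≤ 1} \ Metric.closedBall a 1) :=
            measure_union_le _ _
        _ ≤ ENNReal.ofReal (2 * polyLength v' + π) + ENNReal.ofReal (2 * dist a b) :=
            add_le_add (ih v') (key_diff a b)
        _ = ENNReal.ofReal (2 * polyLength v + π) := by
            have h1 : (0:ℝ) ≤ 2 * polyLength v' + π :=
              by linarith [polyLength_nonneg v', Real.pi_nonneg]
            rw [← ENNReal.ofReal_add h1 (by positivity)]
            congr 1
            rw [hlen]; ring
end
end
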